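/- Let m₁,…,m_r be non-negative integers and a a positive integer with a > m₁ + ⋯ + m_r. Then ∑_{k=0}^{a} (-a)_k (1+m₁)_k ⋯ (1+m_r)_k / ((1)_k^r * k!) = 0. -/

import Mathlib

open Polynomial Finset Function fwdDiff

private lemma km_fwdDiff_eval (p : ℚ[X]) :
    Δ_[(1:ℕ)] (fun n : ℕ => p.eval (n : ℚ)) = fun n : ℕ => (p.comp (X + 1) - p).eval (n : ℚ) := by
  funext n
  simp [fwdDiff, eval_comp, Nat.cast_add, Nat.cast_one]

private lemma km_degree_sub_lt (p : ℚ[X]) (hp : p ≠ 0) :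
    (p.comp (X + 1) - p).degree < p.degree := by
  have h1 : (X + 1 : ℚ[X]) = X + C 1 := by simp
  have hceq : p.comp (X + 1) = Polynomial.taylor 1 p := by rw [taylor_apply, h1]
  have hne : p.comp (X + 1) ≠ 0 := by
    rw [hceq]; intro h
    exact hp (taylor_injective 1 (by simpa using h))
  have hdeg : (p.comp (X + 1)).degree = p.degree := by
    rw [degree_eq_natDegree hne, degree_eq_natDegree hp, hceq, natDegree_taylor]
  have hXne : (X + 1 : ℚ[X]).natDegree ≠ 0 := by
    rw [h1, natDegree_X_add_C]; exact one_ne_zero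
  have hlc : (p.comp (X + 1)).leadingCoeff = p.leadingCoeff := by
    rw [leadingCoeff_comp hXne]
    have : (X + 1 : ℚ[X]).leadingCoeff = 1 := by
      rw [h1]; exact (monic_X_add_C (1:ℚ)).leadingCoeff
    simp [this]
  have := degree_sub_lt hdeg hne hlc
  rwa [hdeg] at this

private lemma km_fwdDiff_iter_zero (a : ℕ) :
    ∀ (p : ℚ[X]), p.degree < (a : WithBot ℕ) → ∀ n : ℕ,
      (Δ_[(1:ℕ)])^[a] (fun k : ℕ => p.eval (k : ℚ)) n = 0 := by
  induction a with
  | zero =>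
    intro p hp n
    have hp0 : p = 0 := by
      rw [← degree_eq_bot]
      exact Nat.WithBot.lt_zero_iff.mp (by exact_mod_cast hp)
    simp [hp0]
  | succ a ih =>
    intro p hp n
    rw [Function.iterate_succ_apply, km_fwdDiff_eval]
    refine ih _ ?_ n
    by_cases h0 : p = 0
    · simp only [h0, zero_comp, sub_zero, degree_zero]
      exact WithBot.bot_lt_coe a
    · have h1 := km_degree_sub_lt p h0
      have h2 : p.degree ≤ (a : WithBot ℕ) := by
        rw [degree_eq_natDegree h0] at hp ⊢
        exact_mod_cast Nat.lt_succ_iff.mp (by exact_mod_cast hp)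
      exact lt_of_lt_of_le h1 h2

private lemma km_eval_neg (a k : ℕ) :
    (ascPochhammer ℚ k).eval (-(a : ℚ)) = (-1)^k * (a.choose k : ℚ) * k.factorial := by
  rw [ascPochhammer_eval_neg_eq_descPochhammer, descPochhammer_eval_eq_descFactorial,
    Nat.descFactorial_eq_factorial_mul_choose]
  push_cast
  ring

private lemma km_eval_one_add (k mi : ℕ) :
    (ascPochhammer ℚ k).eval ((1 : ℚ) + mi) = ((k + mi).choose mi : ℚ) * k.factorial := by
  have h1 : ((mi.factorial : ℚ)) * (ascPochhammer ℚ k).eval ((mi : ℚ) + 1) = ((mi + k).factorial : ℚ) :=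
    factorial_mul_ascPochhammer ℚ mi k
  have h2 : (k + mi).choose mi * mi.factorial * k.factorial = (k + mi).factorial := by
    have h := Nat.choose_mul_factorial_mul_factorial (Nat.le_add_left mi k)
    simpa using h
  have hm : ((mi.factorial : ℚ)) ≠ 0 := by exact_mod_cast mi.factorial_ne_zero
  have hcomm : (1:ℚ) + mi = (mi:ℚ) + 1 := by ring
  rw [hcomm]
  apply mul_left_cancel₀ hm
  rw [h1, show mi + k = k + mi from Nat.add_comm mi k, ← h2]
  push_cast
  ring

private lemma km_p_eval (k mi : ℕ) :
    ((mi.factorial : ℚ))⁻¹ * (ascPochhammer ℚ mi).eval ((k : ℚ) + 1)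
      = ((k + mi).choose mi : ℚ) := by
  have h1 : ((k.factorial : ℚ)) * (ascPochhammer ℚ mi).eval ((k : ℚ) + 1)
      = ((k + mi).factorial : ℚ) := factorial_mul_ascPochhammer ℚ k mi
  have h2 : (k + mi).choose mi * mi.factorial * k.factorial = (k + mi).factorial := by
    simpa using Nat.choose_mul_factorial_mul_factorial (Nat.le_add_left mi k)
  have hm : ((mi.factorial : ℚ)) ≠ 0 := by exact_mod_cast mi.factorial_ne_zero
  have hk : ((k.factorial : ℚ)) ≠ 0 := by exact_mod_cast k.factorial_ne_zero
  rw [inv_mul_eq_div, div_eq_iff hm]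
  apply mul_left_cancel₀ hk
  rw [h1, ← h2]
  push_cast
  ring

theorem karlsson_minton (r : ℕ) (m : Fin r → ℕ) (a : ℕ) (ha : 0 < a)
    (hgt : (∑ i, m i) < a) :
    ∑ k ∈ Finset.range (a + 1),
        ((ascPochhammer ℚ k).eval (-(a : ℚ))
            * ∏ i, (ascPochhammer ℚ k).eval ((1 : ℚ) + m i))
          / (((ascPochhammer ℚ k).eval (1 : ℚ)) ^ r * k.factorial) = 0 := by
  set p : ℚ[X] := ∏ i, (C (((m i).factorial : ℚ))⁻¹ * (ascPochhammer ℚ (m i)).comp (X + C 1))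
    with hpdef
  have hpeval : ∀ k : ℕ, p.eval (k : ℚ) = ∏ i, ((k + m i).choose (m i) : ℚ) := by
    intro k
    rw [hpdef, eval_prod]
    refine Finset.prod_congr rfl fun i _ => ?_
    rw [eval_mul, eval_C, eval_comp, eval_add, eval_X, eval_C]
    exact km_p_eval k (m i)
  have hdeg : p.degree < (a : WithBot ℕ) := by
    have h1 : p.natDegree ≤ ∑ i, m i := by
      refine le_trans (natDegree_prod_le _ _) (Finset.sum_le_sum fun i _ => ?_)
      refine le_trans (natDegree_C_mul_le _ _) ?_
      rw [natDegree_comp, ascPochhammer_natDegree, natDegree_X_add_C, mul_one]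
    calc p.degree ≤ (p.natDegree : WithBot ℕ) := degree_le_natDegree
      _ ≤ ((∑ i, m i : ℕ) : WithBot ℕ) := by exact_mod_cast h1
      _ < (a : WithBot ℕ) := by exact_mod_cast hgt
  have key : (Δ_[(1:ℕ)])^[a] (fun k : ℕ => p.eval (k : ℚ)) 0 = 0 :=
    km_fwdDiff_iter_zero a p hdeg 0
  have hshift := fwdDiff_iter_eq_sum_shift (1:ℕ) (fun k : ℕ => p.eval (k : ℚ)) a 0
  rw [key] at hshift
  simp only [zero_add, smul_eq_mul, mul_one] at hshift
  have hterm : ∀ k ∈ Finset.range (a+1),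
      ((ascPochhammer ℚ k).eval (-(a : ℚ))
            * ∏ i, (ascPochhammer ℚ k).eval ((1 : ℚ) + m i))
          / (((ascPochhammer ℚ k).eval (1 : ℚ)) ^ r * k.factorial)
      = (-1:ℚ)^a * ((((-1:ℤ)^(a-k) * a.choose k : ℤ)) • p.eval ((k : ℕ) : ℚ)) := by
    intro k hk
    rw [Finset.mem_range, Nat.lt_succ_iff] at hk
    have hkf : ((k.factorial : ℚ)) ≠ 0 := by exact_mod_cast k.factorial_ne_zero
    have hne : ((k.factorial : ℚ))^r * (k.factorial : ℚ) ≠ 0 := mul_ne_zero (pow_ne_zero _ hkf) hkf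
    have hsign : (-1:ℚ)^a * (-1:ℚ)^(a-k) = (-1:ℚ)^k := by
      rw [← pow_add]
      have h : a + (a - k) = 2*(a-k) + k := by omega
      rw [h, pow_add, pow_mul, neg_one_sq, one_pow, one_mul]
    rw [ascPochhammer_eval_one, km_eval_neg,
        Finset.prod_congr rfl (fun i _ => km_eval_one_add k (m i)),
        Finset.prod_mul_distrib, Finset.prod_const, Finset.card_univ, Fintype.card_fin,
        zsmul_eq_mul, hpeval, div_eq_iff hne]
    push_cast
    linear_combination (-((a.choose k : ℚ) * (∏ i, ((k + m i).choose (m i):ℚ))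
      * (k.factorial:ℚ)^r * (k.factorial:ℚ))) * hsign
  rw [Finset.sum_congr rfl hterm, ← Finset.mul_sum]
  rw [show (∑ k ∈ Finset.range (a+1),
      ((((-1:ℤ)^(a-k) * a.choose k : ℤ)) • p.eval ((k : ℕ) : ℚ))) = 0 from hshift.symm, mul_zero]
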